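/- (Theorem A.1: convergence of multiplicative weights for the canonical optimization task, stated for an arbitrary oracle-response sequence.) Let m ≥ 2, n ≥ 1 be integers, A ∈ ℝ^{m×n}, b ∈ ℝ^n, ε > 0, ρ > 0, and set β := ε/(2ρ²). Let T ≥ 1 be an integer with T ≥ 4·ε^{−2}·ρ²·ln m, and let x_1, …, x_T ∈ ℝ^n be any sequence. For t = 1, …, T, let S_t := ∑_{s<t} x_s (so S_1 = 0), define p_t ∈ ℝ^m by p_t(i) := exp(β·(A S_t)_i)/∑_{j=1}^m exp(β·(A S_t)_j), and let μ_t := ⟨p_t, A x_t⟩ + ⟨b, x_t⟩. Assume that ‖A x_t‖∞ ≤ ρ for every t. Then the average x_* := (1/T)·∑_{t=1}^T x_t satisfies max_i (A x_*)_i + ⟨b, x_*⟩ ≤ max_{t=1,…,T} μ_t + ε. -/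

import Mathlib

lemma exp_le_quad {a : ℝ} (h : |a| ≤ 1) : Real.exp a ≤ 1 + a + a ^ 2 := by
  have hb := Real.exp_bound h (n := 2) (by norm_num)
  have h2 : (∑ m ∈ Finset.range 2, a ^ m / m.factorial) = 1 + a := by
    simp [Finset.sum_range_succ]
  rw [h2] at hb
  have hsq : |a| ^ 2 = a ^ 2 := sq_abs a
  rw [hsq] at hb
  have := abs_le.mp hb
  norm_num at this
  nlinarith [sq_nonneg a]

theorem mw_canonical_convergence (m n : ℕ) (hm : 2 ≤ m) (hn : 1 ≤ n)
    (A : Matrix (Fin m) (Fin n) ℝ) (b : Fin n → ℝ)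
    (ε ρ : ℝ) (hε : 0 < ε) (hρ : 0 < ρ)
    (β : ℝ) (hβ : β = ε / (2 * ρ ^ 2))
    (T : ℕ) (hT1 : 1 ≤ T) (hT : 4 * ε⁻¹ ^ 2 * ρ ^ 2 * Real.log m ≤ (T : ℝ))
    (x : Fin T → Fin n → ℝ)
    (S : Fin T → Fin n → ℝ)
    (hS : ∀ t, S t = ∑ s ∈ Finset.univ.filter (fun s => s < t), x s)
    (p : Fin T → Fin m → ℝ)
    (hp : ∀ t i, p t i =
      Real.exp (β * A.mulVec (S t) i) / ∑ j, Real.exp (β * A.mulVec (S t) j))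
    (μ : Fin T → ℝ)
    (hμ : ∀ t, μ t = (∑ i, p t i * A.mulVec (x t) i) + ∑ i, b i * x t i)
    (hwidth : ∀ t, ‖A.mulVec (x t)‖ ≤ ρ)
    (xstar : Fin n → ℝ) (hxstar : xstar = (T : ℝ)⁻¹ • ∑ t, x t) :
    (Finset.univ.sup' (Finset.univ_nonempty_iff.mpr ⟨⟨0, by omega⟩⟩)
        fun i => A.mulVec xstar i) + (∑ i, b i * xstar i) ≤
      (Finset.univ.sup' (Finset.univ_nonempty_iff.mpr ⟨⟨0, hT1⟩⟩) μ) + ε := by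
  have hTpos : (0:ℝ) < T := by exact_mod_cast hT1
  have hβpos : 0 < β := by rw [hβ]; positivity
  -- coordinatewise width
  have hw : ∀ t i, |A.mulVec (x t) i| ≤ ρ := by
    intro t i
    calc |A.mulVec (x t) i| = ‖A.mulVec (x t) i‖ := (Real.norm_eq_abs _).symm
    _ ≤ ‖A.mulVec (x t)‖ := norm_le_pi_norm _ i
    _ ≤ ρ := hwidth t
  -- p is a probability vector
  have hWSpos : ∀ t, 0 < ∑ j, Real.exp (β * A.mulVec (S t) j) :=
    fun t => Finset.sum_pos (fun j _ => Real.exp_pos _) ⟨⟨0, by omega⟩, Finset.mem_univ _⟩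
  have hpnn : ∀ t i, 0 ≤ p t i := by
    intro t i; rw [hp]; positivity
  have hpsum : ∀ t, ∑ i, p t i = 1 := by
    intro t
    simp only [hp]
    rw [← Finset.sum_div, div_self (ne_of_gt (hWSpos t))]
  -- mean value helpers
  set ν : Fin T → ℝ := fun t => ∑ i, p t i * A.mulVec (x t) i with hν
  have hν_lb : ∀ t, -ρ ≤ ν t := by
    intro t
    have : ∑ i, p t i * (-ρ) ≤ ∑ i, p t i * A.mulVec (x t) i := by
      apply Finset.sum_le_sum
      intro i _
      exact mul_le_mul_of_nonneg_left (neg_le_of_abs_le (hw t i)) (hpnn t i)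
    rwa [← Finset.sum_mul, hpsum, one_mul] at this
  -- xstar decompositions
  have hAxstar : ∀ i, A.mulVec xstar i = (T:ℝ)⁻¹ * ∑ t, A.mulVec (x t) i := by
    intro i
    simp only [hxstar, Matrix.mulVec, dotProduct, Pi.smul_apply, Finset.sum_apply,
      smul_eq_mul, Finset.mul_sum]
    rw [Finset.sum_comm]
    congr 1; funext t; congr 1; funext j; ring
  have hbxstar : ∑ i, b i * xstar i = (T:ℝ)⁻¹ * ∑ t, ∑ i, b i * x t i := by
    simp only [hxstar, Pi.smul_apply, Finset.sum_apply, smul_eq_mul, Finset.mul_sum]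
    rw [Finset.sum_comm]
    congr 1; funext t; congr 1; funext i; ring
  -- mean μ ≤ max μ
  have hμmax : ∑ t, μ t ≤ (T:ℝ) * (Finset.univ.sup' (Finset.univ_nonempty_iff.mpr ⟨⟨0, hT1⟩⟩) μ) := by
    calc ∑ t, μ t ≤ ∑ _t : Fin T, (Finset.univ.sup' (Finset.univ_nonempty_iff.mpr ⟨⟨0, hT1⟩⟩) μ) :=
        Finset.sum_le_sum (fun t _ => Finset.le_sup' μ (Finset.mem_univ t))
      _ = (T:ℝ) * _ := by simp [mul_comm]
  have hμsum : ∑ t, μ t = (∑ t, ν t) + ∑ t, ∑ i, b i * x t i := by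
    rw [← Finset.sum_add_distrib]; exact Finset.sum_congr rfl (fun t _ => hμ t)
  by_cases hcase : 2 * ρ ≤ ε
  · -- easy case
    have h1 : (Finset.univ.sup' (Finset.univ_nonempty_iff.mpr ⟨⟨0, by omega⟩⟩)
        fun i => A.mulVec xstar i) ≤ ρ := by
      apply Finset.sup'_le
      intro i _
      rw [hAxstar i]
      have : ∑ t, A.mulVec (x t) i ≤ (T:ℝ) * ρ := by
        calc ∑ t, A.mulVec (x t) i ≤ ∑ _t : Fin T, ρ :=
            Finset.sum_le_sum (fun t _ => le_of_abs_le (hw t i))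
          _ = (T:ℝ) * ρ := by simp [mul_comm]
      calc (T:ℝ)⁻¹ * ∑ t, A.mulVec (x t) i ≤ (T:ℝ)⁻¹ * ((T:ℝ) * ρ) := by
            apply mul_le_mul_of_nonneg_left this (by positivity)
        _ = ρ := by field_simp
    have h2 : ∑ i, b i * xstar i ≤
        (Finset.univ.sup' (Finset.univ_nonempty_iff.mpr ⟨⟨0, hT1⟩⟩) μ) + ρ := by
      rw [hbxstar]
      have hb1 : ∀ t : Fin T, ∑ i, b i * x t i ≤ μ t + ρ := by
        intro t
        have h := hμ t
        have h2 := hν_lb t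
        change μ t = ν t + _ at h
        linarith
      have hb2 : ∑ t, ∑ i, b i * x t i ≤
          (T:ℝ) * (Finset.univ.sup' (Finset.univ_nonempty_iff.mpr ⟨⟨0, hT1⟩⟩) μ) + (T:ℝ) * ρ := by
        calc ∑ t, ∑ i, b i * x t i ≤ ∑ t, (μ t + ρ) := Finset.sum_le_sum (fun t _ => hb1 t)
          _ = (∑ t, μ t) + (T:ℝ) * ρ := by rw [Finset.sum_add_distrib]; simp [mul_comm]
          _ ≤ _ := by linarith [hμmax]
      calc (T:ℝ)⁻¹ * ∑ t, ∑ i, b i * x t i ≤ (T:ℝ)⁻¹ * ((T:ℝ) * (Finset.univ.sup' (Finset.univ_nonempty_iff.mpr ⟨⟨0, hT1⟩⟩) μ) + (T:ℝ) * ρ) :=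
            mul_le_mul_of_nonneg_left hb2 (by positivity)
        _ = _ := by field_simp
    linarith
  · -- hard case
    push_neg at hcase
    have hc1 : β * ρ ≤ 1 := by
      rw [hβ, div_mul_eq_mul_div, div_le_one (by positivity)]
      nlinarith
    set s : ℕ → Fin n → ℝ :=
      fun k => ∑ t ∈ Finset.univ.filter (fun t : Fin T => (t:ℕ) < k), x t with hsdef
    have hsS : ∀ t : Fin T, S t = s t.val := by
      intro t
      have he : (Finset.univ.filter (fun u : Fin T => u < t))
          = (Finset.univ.filter (fun u : Fin T => (u:ℕ) < (t:ℕ))) := by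
        ext u; simp only [Finset.mem_filter, Finset.mem_univ, true_and, Fin.lt_def]
      rw [hS t, he]
    have hfilter_succ : ∀ k : Fin T,
        (Finset.univ.filter (fun t : Fin T => (t:ℕ) < k.val + 1))
          = insert k (Finset.univ.filter (fun t : Fin T => (t:ℕ) < k.val)) := by
      intro k
      ext u
      simp only [Finset.mem_filter, Finset.mem_insert, Finset.mem_univ, true_and]
      constructor
      · intro h
        rcases Nat.lt_succ_iff_lt_or_eq.mp h with h | h
        · exact Or.inr h
        · exact Or.inl (Fin.ext h)
      · rintro (rfl | h) <;> omega
    have hstep : ∀ k : Fin T, s (k.val + 1) = s k.val + x k := by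
      intro k
      simp only [hsdef]
      rw [hfilter_succ k, Finset.sum_insert (by simp)]
      abel
    have hsT : s T = ∑ t, x t := by
      simp only [hsdef]
      congr 1
      ext u
      simp [u.isLt]
    set W : ℕ → ℝ := fun k => ∑ i, Real.exp (β * A.mulVec (s k) i) with hWdef
    have hWpos : ∀ k, 0 < W k :=
      fun k => Finset.sum_pos (fun i _ => Real.exp_pos _) ⟨⟨0, by omega⟩, Finset.mem_univ _⟩
    have hW0 : W 0 = m := by
      have hs0 : s 0 = 0 := by
        simp [hsdef]
      simp [hWdef, hs0, Matrix.mulVec_zero]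
    have hkey : ∀ k : Fin T, W (k.val + 1) ≤ W k.val * Real.exp (β * ν k + (β*ρ)^2) := by
      intro k
      have hA : ∀ i, A.mulVec (s (k.val+1)) i = A.mulVec (s k.val) i + A.mulVec (x k) i := by
        intro i
        rw [hstep k, Matrix.mulVec_add]
        rfl
      have hexp : ∀ i, Real.exp (β * A.mulVec (s (k.val+1)) i)
          = W k.val * (p k i * Real.exp (β * A.mulVec (x k) i)) := by
        intro i
        rw [hA i, mul_add, Real.exp_add, hp k i, hsS k]
        have hWne : (∑ j, Real.exp (β * A.mulVec (s (k:ℕ)) j)) ≠ 0 := ne_of_gt (hWpos k.val)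
        rw [hWdef]
        field_simp
      have hWsplit : W (k.val+1) = W k.val * ∑ i, p k i * Real.exp (β * A.mulVec (x k) i) := by
        rw [hWdef]
        simp only []
        rw [Finset.mul_sum]
        exact Finset.sum_congr rfl (fun i _ => hexp i)
      rw [hWsplit]
      apply mul_le_mul_of_nonneg_left _ (le_of_lt (hWpos k.val))
      have h1 : ∀ i, p k i * Real.exp (β * A.mulVec (x k) i)
          ≤ p k i * (1 + β * A.mulVec (x k) i + (β * A.mulVec (x k) i)^2) := by
        intro i
        apply mul_le_mul_of_nonneg_left _ (hpnn k i)
        apply exp_le_quad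
        rw [abs_mul, abs_of_pos hβpos]
        calc β * |A.mulVec (x k) i| ≤ β * ρ :=
            mul_le_mul_of_nonneg_left (hw k i) hβpos.le
          _ ≤ 1 := hc1
      have h2 : ∑ i, p k i * (1 + β * A.mulVec (x k) i + (β * A.mulVec (x k) i)^2)
          ≤ 1 + β * ν k + (β*ρ)^2 := by
        have hq : ∀ i, p k i * (β * A.mulVec (x k) i)^2 ≤ p k i * (β*ρ)^2 := by
          intro i
          apply mul_le_mul_of_nonneg_left _ (hpnn k i)
          have habs : |β * A.mulVec (x k) i| ≤ β * ρ := by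
            rw [abs_mul, abs_of_pos hβpos]
            exact mul_le_mul_of_nonneg_left (hw k i) hβpos.le
          have := abs_le.mp habs
          nlinarith
        have e1 : ∑ i, p k i * (1 + β * A.mulVec (x k) i + (β * A.mulVec (x k) i)^2)
            = (∑ i, p k i) + β * (∑ i, p k i * A.mulVec (x k) i)
              + ∑ i, p k i * (β * A.mulVec (x k) i)^2 := by
          rw [Finset.mul_sum, ← Finset.sum_add_distrib, ← Finset.sum_add_distrib]
          congr 1
          funext i
          ring
        rw [e1, hpsum k]
        have e2 : ∑ i, p k i * (β*ρ)^2 = (β*ρ)^2 := by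
          rw [← Finset.sum_mul, hpsum k, one_mul]
        have e3 : ∑ i, p k i * (β * A.mulVec (x k) i)^2 ≤ (β*ρ)^2 := by
          rw [← e2]
          exact Finset.sum_le_sum (fun i _ => hq i)
        simp only [hν]
        linarith
      calc ∑ i, p k i * Real.exp (β * A.mulVec (x k) i)
          ≤ ∑ i, p k i * (1 + β * A.mulVec (x k) i + (β * A.mulVec (x k) i)^2) :=
            Finset.sum_le_sum (fun i _ => h1 i)
        _ ≤ 1 + β * ν k + (β*ρ)^2 := h2
        _ ≤ Real.exp (β * ν k + (β*ρ)^2) := by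
            have := Real.add_one_le_exp (β * ν k + (β*ρ)^2)
            linarith
    have hind : ∀ k, k ≤ T → W k ≤ (m:ℝ) * Real.exp
        (∑ t ∈ Finset.univ.filter (fun t : Fin T => (t:ℕ) < k), (β * ν t + (β*ρ)^2)) := by
      intro k
      induction k with
      | zero =>
        intro _
        have : (Finset.univ.filter (fun t : Fin T => (t:ℕ) < 0)) = ∅ := by
          ext u; simp
        rw [this]
        simp [hW0]
      | succ k ih =>
        intro hk
        have hkT : k < T := hk
        have ih' := ih (le_of_lt hkT)
        have hk' := hkey ⟨k, hkT⟩
        have hins := hfilter_succ ⟨k, hkT⟩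
        simp only [] at hins hk'
        calc W (k+1) ≤ W k * Real.exp (β * ν ⟨k, hkT⟩ + (β*ρ)^2) := hk'
          _ ≤ ((m:ℝ) * Real.exp (∑ t ∈ Finset.univ.filter (fun t : Fin T => (t:ℕ) < k),
                (β * ν t + (β*ρ)^2))) * Real.exp (β * ν ⟨k, hkT⟩ + (β*ρ)^2) :=
              mul_le_mul_of_nonneg_right ih' (Real.exp_pos _).le
          _ = (m:ℝ) * Real.exp (∑ t ∈ Finset.univ.filter (fun t : Fin T => (t:ℕ) < k + 1),
                (β * ν t + (β*ρ)^2)) := by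
              rw [hins, Finset.sum_insert (by simp)]
              simp only [Real.exp_add]
              ring
    have hfilterT : (Finset.univ.filter (fun t : Fin T => (t:ℕ) < T)) = Finset.univ := by
      ext u; simp [u.isLt]
    have hWT := hind T le_rfl
    rw [hfilterT] at hWT
    have hsum_split : ∑ t : Fin T, (β * ν t + (β*ρ)^2)
        = β * (∑ t, ν t) + (T:ℝ) * (β*ρ)^2 := by
      rw [Finset.sum_add_distrib, ← Finset.mul_sum]
      simp [mul_comm]
    have hmpos : (0:ℝ) < (m:ℝ) := by positivity
    have hcoord : ∀ i, β * A.mulVec (s T) i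
        ≤ Real.log m + (β * (∑ t, ν t) + (T:ℝ) * (β*ρ)^2) := by
      intro i
      have h1 : Real.exp (β * A.mulVec (s T) i) ≤ W T := by
        rw [hWdef]
        exact Finset.single_le_sum (f := fun j => Real.exp (β * A.mulVec (s T) j))
          (fun j _ => (Real.exp_pos _).le) (Finset.mem_univ i)
      have h2 : W T ≤ Real.exp (Real.log m + (β * (∑ t, ν t) + (T:ℝ) * (β*ρ)^2)) := by
        rw [Real.exp_add, Real.exp_log hmpos, ← hsum_split]
        exact hWT
      exact Real.exp_le_exp.mp (h1.trans h2)
    have hAx2 : ∀ i, A.mulVec xstar i = (T:ℝ)⁻¹ * A.mulVec (s T) i := by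
      intro i
      have : xstar = (T:ℝ)⁻¹ • s T := by rw [hxstar, hsT]
      rw [this, Matrix.mulVec_smul]
      rfl
    have hlogm : 0 ≤ Real.log m := Real.log_nonneg (by exact_mod_cast Nat.one_le_of_lt hm)
    have hT' : 4 * ρ^2 * Real.log m ≤ ε^2 * T := by
      have h := mul_le_mul_of_nonneg_left hT (le_of_lt (show (0:ℝ) < ε^2 by positivity))
      have hεne : (ε:ℝ) ≠ 0 := ne_of_gt hε
      rw [inv_pow] at h
      calc 4 * ρ^2 * Real.log m = ε^2 * (4 * (ε^2)⁻¹ * ρ^2 * Real.log m) := by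
            field_simp
        _ ≤ ε^2 * T := h
    have hβρ2 : β * ρ^2 = ε/2 := by
      rw [hβ]; field_simp
    have hL : ∀ i, A.mulVec xstar i ≤ (T:ℝ)⁻¹ * (∑ t, ν t) + ε := by
      intro i
      rw [hAx2 i]
      rw [← mul_le_mul_iff_right₀ (show (0:ℝ) < β * T by positivity)]
      have e1 : β * (T:ℝ) * ((T:ℝ)⁻¹ * A.mulVec (s T) i) = (T:ℝ) * (β * A.mulVec (s T) i) * (T:ℝ)⁻¹ := by ring
      have e1' : β * (T:ℝ) * ((T:ℝ)⁻¹ * A.mulVec (s T) i) = β * A.mulVec (s T) i := by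
        field_simp
      have e2 : β * (T:ℝ) * ((T:ℝ)⁻¹ * (∑ t, ν t) + ε)
          = β * (∑ t, ν t) + β * (T:ℝ) * ε := by
        field_simp
      rw [e1', e2]
      have h3 : Real.log m ≤ β * (T:ℝ) * (ε/2) := by
        rw [hβ]
        rw [show ε / (2*ρ^2) * (T:ℝ) * (ε/2) = ε^2 * (T:ℝ) / (4*ρ^2) by field_simp; ring]
        rw [le_div_iff₀ (by positivity)]
        linarith
      have h4 : (T:ℝ) * (β*ρ)^2 = β * (T:ℝ) * (ε/2) := by
        have : (β*ρ)^2 = β * (β * ρ^2) := by ring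
        rw [this, hβρ2]
        ring
      have h5 := hcoord i
      linarith
    have hsup : (Finset.univ.sup' (Finset.univ_nonempty_iff.mpr ⟨⟨0, by omega⟩⟩)
        fun i => A.mulVec xstar i) ≤ (T:ℝ)⁻¹ * (∑ t, ν t) + ε :=
      Finset.sup'_le _ _ (fun i _ => hL i)
    have hfin : (T:ℝ)⁻¹ * (∑ t, ν t) + ∑ i, b i * xstar i
        ≤ (Finset.univ.sup' (Finset.univ_nonempty_iff.mpr ⟨⟨0, hT1⟩⟩) μ) := by
      rw [hbxstar, ← mul_add, ← hμsum]
      calc (T:ℝ)⁻¹ * (∑ t, μ t)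
          ≤ (T:ℝ)⁻¹ * ((T:ℝ) * (Finset.univ.sup' (Finset.univ_nonempty_iff.mpr ⟨⟨0, hT1⟩⟩) μ)) :=
            mul_le_mul_of_nonneg_left hμmax (by positivity)
        _ = _ := by field_simp
    linarith
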